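/- Every strong-inductive cubical set is consistent: if S is a strong-inductive cubical set in B_n, then for every face f of positive dimension, f belongs to S if and only if every face appearing in the boundary ∂f belongs to S. -/

import Mathlib

/-- A face of the `n`-dimensional cube: a function `Fin n → Fin 3`,
where `0` stands for `0`, `1` stands for `*`, and `2` stands for `1`. -/
abbrev Face (n : ℕ) := Fin n → Fin 3

/-- The dimension of a face: the number of indices mapped to `*` (encoded as `1 : Fin 3`). -/
def fdim {n : ℕ} (f : Face n) : ℕ := (Finset.univ.filter fun i => f i = 1).card

/-- `Adj f g` : the face `g` appears in the boundary `∂ f`, i.e. `g` is obtained from `f`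
by replacing a single occurrence of `*` by `0` or by `1`. -/
def Adj {n : ℕ} (f g : Face n) : Prop :=
  ∃ i, f i = 1 ∧ g i ≠ 1 ∧ ∀ j, j ≠ i → g j = f j

instance {n : ℕ} (f g : Face n) : Decidable (Adj f g) := by unfold Adj; infer_instance

/-- A cubical set is inductive if it is downward closed for the pointwise order
induced by `0 < * < 1`. -/
def Inductive {n : ℕ} (S : Finset (Face n)) : Prop :=
  ∀ f ∈ S, ∀ f' : Face n, (∀ i, f' i ≤ f i) → f' ∈ S

/-- Strong-inductive: inductive, and every maximal face has dimension `0`. -/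
def StrongInductive {n : ℕ} (S : Finset (Face n)) : Prop :=
  Inductive S ∧ ∀ f ∈ S, (∀ g ∈ S, (∀ i, f i ≤ g i) → g = f) → fdim f = 0

/-- A cubical set is consistent if for every face `f` of positive dimension, `f` belongs to
`S` if and only if every face appearing in the boundary `∂f` belongs to `S`. -/
def Consistent {n : ℕ} (S : Finset (Face n)) : Prop :=
  ∀ f : Face n, 0 < fdim f → (f ∈ S ↔ ∀ g, Adj f g → g ∈ S)

/-- Every strong-inductive cubical set is consistent. -/
theorem statement4 (n : ℕ) (S : Finset (Face n)) (hS : StrongInductive S) :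
    Consistent S := by
  obtain ⟨hInd, hMax⟩ := hS
  have key : ∀ f ∈ S, ∃ h ∈ S, (∀ i, f i ≤ h i) ∧ ∀ i, h i ≠ 1 := by
    intro f hf
    obtain ⟨h, hh, hmax⟩ : ∃ m ∈ (S.filter fun g => ∀ i, f i ≤ g i),
        ∀ x ∈ (S.filter fun g => ∀ i, f i ≤ g i), ¬ m < x := by
      obtain ⟨m, hm⟩ := Finset.exists_maximal (s := S.filter fun g => ∀ i, f i ≤ g i)
        ⟨f, by simp [hf]⟩
      exact ⟨m, hm.1, fun x hx hlt => lt_irrefl _ (lt_of_lt_of_le hlt (hm.2 hx hlt.le))⟩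
    simp only [Finset.mem_filter] at hh
    have hdim : fdim h = 0 := by
      apply hMax h hh.1
      intro g hg hle
      by_contra hne
      exact hmax g (Finset.mem_filter.mpr ⟨hg, fun i => le_trans (hh.2 i) (hle i)⟩)
        (lt_of_le_of_ne (fun i => hle i) (Ne.symm hne))
    refine ⟨h, hh.1, hh.2, ?_⟩
    intro i
    have := Finset.filter_eq_empty_iff.mp (Finset.card_eq_zero.mp hdim) (Finset.mem_univ i)
    exact this
  intro f hpos
  constructor
  · rintro hf g ⟨i, hfi, hgi, hgj⟩
    obtain ⟨h, hhS, hle, hne1⟩ := key f hf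
    have hv3 := (g i).isLt
    interval_cases hv : (g i).val
    · -- g i = 0 : g ≤ f
      apply hInd f hf g
      intro j
      by_cases hj : j = i
      · subst hj; simp [Fin.le_def, hv]
      · rw [hgj j hj]
    · exact absurd (Fin.ext hv) hgi
    · -- g i = 2 : g ≤ h
      apply hInd h hhS g
      intro j
      by_cases hj : j = i
      · subst hj
        have h1 : (1 : Fin 3).val ≤ (h j).val := by
          have := hle j; rw [hfi] at this; exact this
        have h2 : (h j).val ≠ 1 := fun hc => hne1 j (Fin.ext hc)
        have : (h j).val = 2 := by omega
        simp [Fin.le_def, hv, this]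
      · rw [hgj j hj]; exact hle j
  · intro hall
    obtain ⟨i, hi⟩ : ∃ i, f i = 1 := by
      have : (Finset.univ.filter fun i => f i = 1).Nonempty :=
        Finset.card_pos.mp hpos
      obtain ⟨i, hi⟩ := this
      exact ⟨i, (Finset.mem_filter.mp hi).2⟩
    have hadj : Adj f (Function.update f i 2) := by
      refine ⟨i, hi, by simp, fun j hj => Function.update_of_ne hj _ _⟩
    apply hInd _ (hall _ hadj) f
    intro j
    by_cases hj : j = i
    · subst hj
      rw [hi, Function.update_self]
      exact Fin.le_def.mpr (by norm_num)
    · rw [Function.update_of_ne hj]
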